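/- arXiv:0708.4094 — 2 statements merged into one kernel-verified Lean document; each statement's English description precedes it below -/
import Mathlib

section
/- For any unit vectors φ, ψ ∈ L²(ℝ), all p ∈ ℝ and almost all q ∈ ℝ: √2·(1/√(2π))·⟨W(√2 q, √2 p)Cψ, φ⟩ = F[[B(φ⊗ψ)](q,·)](p), where B is the 50-50 beam splitter unitary on L²(ℝ²). -/
open MeasureTheory

open MeasureTheory

/-- The Weyl operator `W(q,p) = e^{iqp/2} e^{−iqP} e^{ipQ}` acting on functions:
`(W(q,p)ψ)(x) = e^{iqp/2} e^{ip(x−q)} ψ(x−q)`. -/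
noncomputable def weylOp (q p : ℝ) (ψ : ℝ → ℂ) : ℝ → ℂ := fun x =>
  Complex.exp (Complex.I * q * p / 2) * Complex.exp (Complex.I * p * (x - q)) * ψ (x - q)

/-- The antiunitary conjugation `C`. -/
noncomputable def conjFun (ψ : ℝ → ℂ) : ℝ → ℂ := fun x => (starRingEnd ℂ) (ψ x)

/-- The `L²` inner product, antilinear in the first argument. -/
noncomputable def innerL2 (f g : ℝ → ℂ) : ℂ := ∫ x : ℝ, (starRingEnd ℂ) (f x) * g x

/-- The Fourier(–Plancherel) transform on `L¹ ∩ L²` functions: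
`(Fφ)(y) = (1/√(2π)) ∫ e^{−iyx} φ(x) dx`. -/
noncomputable def fourierPl (f : ℝ → ℂ) (p : ℝ) : ℂ :=
  (Real.sqrt (2 * Real.pi) : ℂ)⁻¹ * ∫ x : ℝ, Complex.exp (-(Complex.I * p * x)) * f x

/-- Change of variables `y = √2·x − q` for a full-line integral. -/
lemma integral_comp_sqrt2_sub (g : ℝ → ℂ) (q : ℝ) :
    (∫ x : ℝ, g (Real.sqrt 2 * x - q)) = (Real.sqrt 2)⁻¹ • ∫ y : ℝ, g y := by
  have h1 : (∫ x : ℝ, (fun t => g (t - q)) (Real.sqrt 2 * x))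
      = |(Real.sqrt 2)⁻¹| • ∫ y : ℝ, (fun t => g (t - q)) y :=
    MeasureTheory.Measure.integral_comp_mul_left (fun t => g (t - q)) (Real.sqrt 2)
  simp only at h1
  rw [h1, integral_sub_right_eq_self g q,
    abs_of_nonneg (by positivity : (0:ℝ) ≤ (Real.sqrt 2)⁻¹)]

/-- The pointwise identity behind the change of variables. -/
lemma weyl_pointwise (p q x : ℝ) (ψ φ : ℝ → ℂ) :
    (starRingEnd ℂ) (weylOp (Real.sqrt 2 * q) (Real.sqrt 2 * p) (conjFun ψ) x) * φ x
      = Complex.exp (-(Complex.I * p * (Real.sqrt 2 * x - q))) *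
        (φ x * ψ (x - Real.sqrt 2 * q)) := by
  have hs : Real.sqrt 2 * Real.sqrt 2 = 2 := Real.mul_self_sqrt (by norm_num)
  have hsC : (Real.sqrt 2 : ℂ) * (Real.sqrt 2 : ℂ) = 2 := by
    rw [← Complex.ofReal_mul, hs]; norm_num
  simp only [weylOp, conjFun, map_mul, Complex.conj_conj, ← Complex.exp_conj, map_div₀,
    map_ofNat, Complex.conj_I, Complex.conj_ofReal, map_sub, map_mul]
  rw [mul_comm (Complex.exp _ * Complex.exp _) (ψ _), mul_assoc, ← Complex.exp_add]
  push_cast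
  rw [show -Complex.I * ((Real.sqrt 2:ℂ) * q) * ((Real.sqrt 2:ℂ) * p) / 2 +
      -Complex.I * ((Real.sqrt 2:ℂ) * p) * ((x:ℂ) - (Real.sqrt 2:ℂ) * q)
      = -(Complex.I * p * ((Real.sqrt 2:ℂ) * x - q)) from by
    linear_combination (-(Complex.I*(q:ℂ)*p/2) + Complex.I*(p:ℂ)*q) * hsC]
  ring

/-- For unit vectors `φ, ψ ∈ L²(ℝ)`, all `p ∈ ℝ` and almost all `q ∈ ℝ`:
`√2·(1/√(2π))·⟨W(√2 q, √2 p)Cψ, φ⟩ = F[[B(φ⊗ψ)](q,·)](p)`, where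
`[B(φ⊗ψ)](q,y) = φ((q+y)/√2)·ψ((−q+y)/√2)` is the beam splitter applied to `φ⊗ψ`. -/
theorem weyl_inner_eq_fourier_beamSplitter (φ ψ : ℝ → ℂ)
    (hφ : MemLp φ 2 (volume : Measure ℝ)) (hφ1 : eLpNorm φ 2 (volume : Measure ℝ) = 1)
    (hψ : MemLp ψ 2 (volume : Measure ℝ)) (hψ1 : eLpNorm ψ 2 (volume : Measure ℝ) = 1)
    (p : ℝ) :
    ∀ᵐ q : ℝ,
      (Real.sqrt 2 : ℂ) * (Real.sqrt (2 * Real.pi) : ℂ)⁻¹ *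
          innerL2 (weylOp (Real.sqrt 2 * q) (Real.sqrt 2 * p) (conjFun ψ)) φ
        = fourierPl
            (fun y => φ ((q + y) / Real.sqrt 2) * ψ ((-q + y) / Real.sqrt 2)) p := by
  have hs : Real.sqrt 2 * Real.sqrt 2 = 2 := Real.mul_self_sqrt (by norm_num)
  have hsne : (Real.sqrt 2 : ℝ) ≠ 0 := by positivity
  refine Filter.Eventually.of_forall (fun q => ?_)
  set g : ℝ → ℂ := fun y =>
    Complex.exp (-(Complex.I * p * y)) *
      (φ ((q + y) / Real.sqrt 2) * ψ ((-q + y) / Real.sqrt 2)) with hg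
  have hptwise : ∀ x : ℝ,
      (starRingEnd ℂ) (weylOp (Real.sqrt 2 * q) (Real.sqrt 2 * p) (conjFun ψ) x) * φ x
        = g (Real.sqrt 2 * x - q) := by
    intro x
    have harg1 : (q + (Real.sqrt 2 * x - q)) / Real.sqrt 2 = x := by
      field_simp
      ring
    have harg2 : (-q + (Real.sqrt 2 * x - q)) / Real.sqrt 2 = x - Real.sqrt 2 * q := by
      rw [div_eq_iff hsne]; linear_combination q * hs
    rw [hg]
    simp only [harg1, harg2]
    push_cast
    exact_mod_cast weyl_pointwise p q x ψ φ
  have hinteq : innerL2 (weylOp (Real.sqrt 2 * q) (Real.sqrt 2 * p) (conjFun ψ)) φ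
      = ∫ x : ℝ, g (Real.sqrt 2 * x - q) := by
    unfold innerL2
    exact integral_congr_ae (Filter.Eventually.of_forall hptwise)
  rw [hinteq, integral_comp_sqrt2_sub g q, fourierPl]
  rw [Complex.real_smul]
  push_cast
  have h2 : ((Real.sqrt 2 : ℝ) : ℂ) ≠ 0 := Complex.ofReal_ne_zero.mpr hsne
  rw [mul_mul_mul_comm, mul_inv_cancel₀ h2, one_mul]
end

section
/- Let Eⁿ : Borel(Ω) → L(H) be semispectral measures (normalized POVMs) on a metric space Ω, and E another semispectral measure. If for every state T on H the probability measures Z ↦ Tr[T Eⁿ(Z)] converge weakly to Z ↦ Tr[T E(Z)], then Eⁿ(X) → E(X) in the weak operator topology for every Borel set X with E(∂X) = 0. -/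
open MeasureTheory Filter
open scoped ComplexInnerProductSpace

section Aux

variable {H : Type*} [NormedAddCommGroup H] [InnerProductSpace ℂ H] [CompleteSpace H]
variable {ι : Type*}

/-- Rank-one operator `x ↦ ⟪u, x⟫ • u`. -/
noncomputable def rankOne (u : H) : H →L[ℂ] H := (innerSL ℂ u).smulRight u

lemma rankOne_apply (u x : H) : rankOne u x = ⟪u, x⟫ • u := rfl

lemma rankOne_isPositive (u : H) : (rankOne u).IsPositive := by
  constructor
  · intro x y
    simp [rankOne_apply, inner_smul_left, inner_smul_right, inner_conj_symm, mul_comm]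
  · intro x
    have h : (⟪rankOne u x, x⟫ : ℂ) = Complex.normSq ⟪u, x⟫ := by
      rw [rankOne_apply, inner_smul_left, ← Complex.normSq_eq_conj_mul_self]
    rw [ContinuousLinearMap.reApplyInnerSelf_apply, h]
    simp [Complex.normSq_nonneg]

lemma rankOne_trace (e : HilbertBasis ι ℂ H) (u : H) :
    (∑' i : ι, ⟪e i, rankOne u (e i)⟫) = ⟪u, u⟫ := by
  have : ∀ i : ι, ⟪e i, rankOne u (e i)⟫ = ⟪u, e i⟫ * ⟪e i, u⟫ := by
    intro i; rw [rankOne_apply, inner_smul_right, mul_comm]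
  simp_rw [this]
  exact e.tsum_inner_mul_inner u u

lemma rankOne_trace_comp (e : HilbertBasis ι ℂ H) (u : H) (A : H →L[ℂ] H)
    (hA : IsSelfAdjoint A) :
    (∑' i : ι, ⟪e i, rankOne u (A (e i))⟫) = ⟪A u, u⟫ := by
  have : ∀ i : ι, ⟪e i, rankOne u (A (e i))⟫ = ⟪A u, e i⟫ * ⟪e i, u⟫ := by
    intro i
    have h : (⟪u, A (e i)⟫ : ℂ) = ⟪A u, e i⟫ := by
      conv_rhs => rw [← hA.adjoint_eq]
      rw [ContinuousLinearMap.adjoint_inner_left]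
    rw [rankOne_apply, inner_smul_right, h, mul_comm]
  simp_rw [this]
  exact e.tsum_inner_mul_inner (A u) u

lemma selfAdjoint_inner_real (A : H →L[ℂ] H) (hA : IsSelfAdjoint A) (x : H) :
    (⟪x, A x⟫ : ℂ) = ((⟪x, A x⟫ : ℂ).re : ℂ) := by
  have h1 : (starRingEnd ℂ) ⟪x, A x⟫ = ⟪A x, x⟫ := inner_conj_symm _ _
  have h2 : ⟪A x, x⟫ = ⟪x, A x⟫ := by
    rw [← hA.adjoint_eq, ContinuousLinearMap.adjoint_inner_left, hA.adjoint_eq]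
  exact (Complex.conj_eq_iff_re.mp (by rw [h1, h2])).symm

end Aux

/-- Let `Eⁿ`, `E` be semispectral measures (normalized positive-operator-valued measures)
on the Borel sets of a metric space `Ω`, with values in the bounded operators on a
Hilbert space `H`. If for every state `T` (positive trace-one operator) the probability
measures `Z ↦ Tr[T Eⁿ(Z)]` converge weakly to `Z ↦ Tr[T E(Z)]`, then `Eⁿ(X) → E(X)` in
the weak operator topology for every Borel `X` with `E(∂X) = 0`. Traces are computed in
a Hilbert basis `e`, and the probability measures are given as measures `μn T n`, `μ T`
agreeing with the corresponding traces on Borel sets. -/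
theorem semispectral_weak_convergence
    {Ω : Type*} [MetricSpace Ω] [MeasurableSpace Ω] [BorelSpace Ω]
    {H : Type*} [NormedAddCommGroup H] [InnerProductSpace ℂ H] [CompleteSpace H]
    {ι : Type*} (e : HilbertBasis ι ℂ H)
    (En : ℕ → Set Ω → (H →L[ℂ] H)) (E : Set Ω → (H →L[ℂ] H))
    (hEnpos : ∀ n (Z : Set Ω), MeasurableSet Z → (En n Z).IsPositive)
    (hEpos : ∀ Z : Set Ω, MeasurableSet Z → (E Z).IsPositive)
    (hEnuniv : ∀ n, En n Set.univ = 1) (hEuniv : E Set.univ = 1)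
    (hEnadd : ∀ n (f : ℕ → Set Ω), (∀ k, MeasurableSet (f k)) →
      Pairwise (Function.onFun Disjoint f) → ∀ φ ψ : H,
        HasSum (fun k => ⟪φ, En n (f k) ψ⟫) ⟪φ, En n (⋃ k, f k) ψ⟫)
    (hEadd : ∀ f : ℕ → Set Ω, (∀ k, MeasurableSet (f k)) →
      Pairwise (Function.onFun Disjoint f) → ∀ φ ψ : H,
        HasSum (fun k => ⟪φ, E (f k) ψ⟫) ⟪φ, E (⋃ k, f k) ψ⟫)
    (μn : (H →L[ℂ] H) → ℕ → Measure Ω) (μ : (H →L[ℂ] H) → Measure Ω)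
    (hμn : ∀ (T : H →L[ℂ] H) (n : ℕ) (Z : Set Ω), MeasurableSet Z →
      μn T n Z = ENNReal.ofReal (∑' i : ι, ⟪e i, T (En n Z (e i))⟫ : ℂ).re)
    (hμ : ∀ (T : H →L[ℂ] H) (Z : Set Ω), MeasurableSet Z →
      μ T Z = ENNReal.ofReal (∑' i : ι, ⟪e i, T (E Z (e i))⟫ : ℂ).re)
    (hweak : ∀ T : H →L[ℂ] H, T.IsPositive → (∑' i : ι, ⟪e i, T (e i)⟫) = 1 →
      ∀ f : Ω → ℝ, Continuous f → (∃ M, ∀ x, |f x| ≤ M) →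
        Tendsto (fun n => ∫ x, f x ∂(μn T n)) atTop (nhds (∫ x, f x ∂(μ T))))
    (X : Set Ω) (hX : MeasurableSet X) (hfr : E (frontier X) = 0) :
    ∀ φ ψ : H, Tendsto (fun n => ⟪φ, En n X ψ⟫) atTop (nhds ⟪φ, E X ψ⟫) := by
  -- Step 1: quadratic forms for unit vectors
  have step1u : ∀ u : H, ‖u‖ = 1 →
      Tendsto (fun n => (⟪u, En n X u⟫ : ℂ)) atTop (nhds ⟪u, E X u⟫) := by
    intro u hu
    set T : H →L[ℂ] H := rankOne u with hT
    have hTpos : T.IsPositive := rankOne_isPositive u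
    have huu : (⟪u, u⟫ : ℂ) = 1 := by
      rw [inner_self_eq_norm_sq_to_K, hu]; norm_num
    have hTtr : (∑' i : ι, ⟪e i, T (e i)⟫) = 1 := by
      rw [hT, rankOne_trace e u, huu]
    -- trace formulas
    have htrn : ∀ n, (∑' i : ι, ⟪e i, T (En n X (e i))⟫ : ℂ).re = (⟪u, En n X u⟫ : ℂ).re := by
      intro n
      rw [hT, rankOne_trace_comp e u _ (hEnpos n X hX).isSelfAdjoint,
        ← inner_conj_symm, Complex.conj_re]
    have htr : (∑' i : ι, ⟪e i, T (E X (e i))⟫ : ℂ).re = (⟪u, E X u⟫ : ℂ).re := by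
      rw [hT, rankOne_trace_comp e u _ (hEpos X hX).isSelfAdjoint,
        ← inner_conj_symm, Complex.conj_re]
    -- probability measures
    have hprobn : ∀ n, IsProbabilityMeasure (μn T n) := by
      intro n
      constructor
      rw [hμn T n Set.univ MeasurableSet.univ, hEnuniv n]
      simp only [ContinuousLinearMap.one_apply]
      rw [hTtr]
      norm_num
    have hprob : IsProbabilityMeasure (μ T) := by
      constructor
      rw [hμ T Set.univ MeasurableSet.univ, hEuniv]
      simp only [ContinuousLinearMap.one_apply]
      rw [hTtr]
      norm_num
    set Pn : ℕ → ProbabilityMeasure Ω := fun n => ⟨μn T n, hprobn n⟩ with hPn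
    set P : ProbabilityMeasure Ω := ⟨μ T, hprob⟩ with hP
    have hconv : Tendsto Pn atTop (nhds P) := by
      rw [ProbabilityMeasure.tendsto_iff_forall_integral_tendsto]
      intro f
      exact hweak T hTpos hTtr f f.continuous
        ⟨‖f‖, fun x => by simpa [Real.norm_eq_abs] using f.norm_coe_le_norm x⟩
    have hnull : (P : Measure Ω) (frontier X) = 0 := by
      show μ T (frontier X) = 0
      rw [hμ T (frontier X) isClosed_frontier.measurableSet, hfr]
      simp
    have key := ProbabilityMeasure.tendsto_measure_of_null_frontier_of_tendsto' hconv hnull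
    -- key : Tendsto (fun n => (Pn n : Measure Ω) X) atTop (nhds ((P : Measure Ω) X))
    have key2 : Tendsto (fun n => (μn T n X).toReal) atTop (nhds ((μ T X).toReal)) :=
      (ENNReal.tendsto_toReal (measure_ne_top _ _)).comp key
    have hposn : ∀ n, 0 ≤ (⟪u, En n X u⟫ : ℂ).re := fun n => (hEnpos n X hX).re_inner_nonneg_right u
    have hpos : 0 ≤ (⟪u, E X u⟫ : ℂ).re := (hEpos X hX).re_inner_nonneg_right u
    have keyre : Tendsto (fun n => (⟪u, En n X u⟫ : ℂ).re) atTop (nhds (⟪u, E X u⟫ : ℂ).re) := by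
      have h1 : ∀ n, (μn T n X).toReal = (⟪u, En n X u⟫ : ℂ).re := by
        intro n
        rw [hμn T n X hX, ENNReal.toReal_ofReal (by rw [htrn n]; exact hposn n), htrn n]
      have h2 : (μ T X).toReal = (⟪u, E X u⟫ : ℂ).re := by
        rw [hμ T X hX, ENNReal.toReal_ofReal (by rw [htr]; exact hpos), htr]
      rw [← h2]
      exact key2.congr h1
    have hrealn : ∀ n, (⟪u, En n X u⟫ : ℂ) = ((⟪u, En n X u⟫ : ℂ).re : ℂ) :=
      fun n => selfAdjoint_inner_real _ (hEnpos n X hX).isSelfAdjoint u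
    have hreal : (⟪u, E X u⟫ : ℂ) = ((⟪u, E X u⟫ : ℂ).re : ℂ) :=
      selfAdjoint_inner_real _ (hEpos X hX).isSelfAdjoint u
    rw [hreal]
    exact ((Complex.continuous_ofReal.tendsto _).comp keyre).congr (fun n => (hrealn n).symm)
  -- Step 1': quadratic forms for all vectors
  have step1 : ∀ z : H,
      Tendsto (fun n => (⟪z, En n X z⟫ : ℂ)) atTop (nhds ⟪z, E X z⟫) := by
    intro z
    rcases eq_or_ne z 0 with rfl | hz
    · simp
    · set u : H := (‖z‖⁻¹ : ℂ) • z with hu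
      have hun : ‖u‖ = 1 := norm_smul_inv_norm (𝕜 := ℂ) hz
      have hscale : ∀ A : H →L[ℂ] H, (⟪z, A z⟫ : ℂ) = ((‖z‖ : ℂ)^2) * ⟪u, A u⟫ := by
        intro A
        have hz' : (‖z‖ : ℂ) ≠ 0 := by
          exact_mod_cast norm_ne_zero_iff.mpr hz
        rw [hu]
        simp only [ContinuousLinearMap.map_smul, inner_smul_left, inner_smul_right,
          ← Complex.ofReal_inv, Complex.conj_ofReal, Complex.ofReal_inv]
        simp only [map_inv₀, Complex.conj_ofReal]
        field_simp
      have h2 : (fun n => (⟪z, En n X z⟫ : ℂ)) = fun n => ((‖z‖ : ℂ)^2) * ⟪u, En n X u⟫ :=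
        funext fun n => hscale _
      rw [h2, hscale]
      exact (step1u u hun).const_mul ((‖z‖ : ℂ)^2)
  intro φ ψ
  -- quadratic form version with inner in the other order
  have hq : ∀ z : H,
      Tendsto (fun n => (⟪En n X z, z⟫ : ℂ)) atTop (nhds ⟪E X z, z⟫) := by
    intro z
    have := (Complex.continuous_conj.tendsto _).comp (step1 z)
    simpa only [Function.comp_def, inner_conj_symm] using this
  have hpol : Tendsto (fun n => (⟪En n X ψ, φ⟫ : ℂ)) atTop (nhds ⟪E X ψ, φ⟫) := by
    have hcomb : Tendsto (fun n =>
        ((⟪En n X (φ + ψ), φ + ψ⟫ : ℂ) - ⟪En n X (φ - ψ), φ - ψ⟫ +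
          Complex.I * ⟪En n X (φ + Complex.I • ψ), φ + Complex.I • ψ⟫ -
          Complex.I * ⟪En n X (φ - Complex.I • ψ), φ - Complex.I • ψ⟫) / 4) atTop
        (nhds ((⟪E X (φ + ψ), φ + ψ⟫ - ⟪E X (φ - ψ), φ - ψ⟫ +
          Complex.I * ⟪E X (φ + Complex.I • ψ), φ + Complex.I • ψ⟫ -
          Complex.I * ⟪E X (φ - Complex.I • ψ), φ - Complex.I • ψ⟫) / 4)) := by
      exact ((((hq (φ + ψ)).sub (hq (φ - ψ))).add
        ((hq (φ + Complex.I • ψ)).const_mul Complex.I)).sub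
        ((hq (φ - Complex.I • ψ)).const_mul Complex.I)).div_const 4
    have heqn : ∀ A : H →L[ℂ] H, (⟪A ψ, φ⟫ : ℂ) =
        ((⟪A (φ + ψ), φ + ψ⟫ : ℂ) - ⟪A (φ - ψ), φ - ψ⟫ +
          Complex.I * ⟪A (φ + Complex.I • ψ), φ + Complex.I • ψ⟫ -
          Complex.I * ⟪A (φ - Complex.I • ψ), φ - Complex.I • ψ⟫) / 4 := by
      intro A
      exact inner_map_polarization (A : H →ₗ[ℂ] H) φ ψ
    simp_rw [← heqn] at hcomb
    exact hcomb
  have := (Complex.continuous_conj.tendsto _).comp hpol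
  simpa only [Function.comp_def, inner_conj_symm] using this
end
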